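/- arXiv:2601.02895 — 2 statements merged into one kernel-verified Lean document; each statement's English description precedes it below -/
import Mathlib

section
/- Let (A, M) be a dg Lie-Rinehart pair over a field k of characteristic zero and let f₀: A → B be a morphism of cdgas. Define f₀^!M as the pullback of dg B-modules Der(B) ×_{Der(A,B)} (B⊗_A M), where Der(B) → Der(A,B) is precomposition with f₀ and B⊗_A M → Der(A,B) sends b⊗m to b·(f₀∘Γ(m)). Then the bracket [(ρ, Σᵢ bᵢ⊗mᵢ), (ρ′, Σⱼ cⱼ⊗nⱼ)] = ([ρ,ρ′], Σ_{i,j} (−1)^{|mᵢ||cⱼ|} bᵢcⱼ⊗[mᵢ,nⱼ] + Σⱼ ρ(cⱼ)⊗nⱼ − (−1)^{|ρ′|(|bᵢ|+|mᵢ|)} Σᵢ ρ′(bᵢ)⊗mᵢ) is well-defined on f₀^!M and, together with the anchor given by projection to Der(B), makes (B, f₀^!M) a dg Lie-Rinehart pair. -/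
open TensorProduct

/-- `s ⊗ m ↦ s · f₀(Γ(m)(r))` : the map `B ⊗_A M → Der(A, B)` (evaluated at `r : A`) used to
define the Lie–Rinehart pullback. -/
noncomputable def anchorPush (k R S Mod : Type*) [CommRing k] [CommRing R] [CommRing S]
    [Algebra k R] [Algebra R S]
    [AddCommGroup Mod] [Module R Mod]
    (Γ : Mod →ₗ[R] Derivation k R R) (r : R) : S ⊗[R] Mod →ₗ[S] S :=
  TensorProduct.AlgebraTensorModule.lift
    { toFun := fun s =>
        { toFun := fun m => s * algebraMap R S (Γ m r)
          map_add' := by intro m n; simp [mul_add]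
          map_smul' := by
            intro c m
            simp only [map_smul, RingHom.id_apply, Derivation.smul_apply, smul_eq_mul,
              map_mul, Algebra.smul_def]
            ring }
      map_add' := by intro s t; ext m; simp [add_mul]
      map_smul' := by intro s t; ext m; simp [Algebra.smul_def, mul_assoc] }

/-- The underlying `B`-module of the Lie–Rinehart pullback
`f₀^!M = Der(B) ×_{Der(A,B)} (B ⊗_A M)`, where `Der(B) → Der(A,B)` is precomposition with
`f₀ = algebraMap A B` and `B ⊗_A M → Der(A,B)` sends `b ⊗ m` to `b·(f₀ ∘ Γ(m))`. -/
noncomputable def lrPullback (k A B M : Type*) [CommRing k] [CommRing A] [CommRing B]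
    [Algebra k A] [Algebra k B] [Algebra A B]
    [AddCommGroup M] [Module A M]
    (ΓM : M →ₗ[A] Derivation k A A) :
    Submodule B (Derivation k B B × (B ⊗[A] M)) where
  carrier := {p | ∀ a : A, p.1 (algebraMap A B a) = anchorPush k A B M ΓM a p.2}
  add_mem' := by
    intro p q hp hq a
    simp only [Prod.fst_add, Prod.snd_add, map_add, Derivation.add_apply]
    rw [hp a, hq a]
  zero_mem' := by
    intro a
    simp
  smul_mem' := by
    intro b p hp a
    simp only [Prod.smul_fst, Prod.smul_snd, map_smul, Derivation.smul_apply]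
    rw [hp a]


def mkBil {X Y Z : Type*} [AddCommGroup X] [AddCommGroup Y] [AddCommGroup Z]
    (f : X → Y → Z) (h₁ : ∀ x x' y, f (x + x') y = f x y + f x' y)
    (h₂ : ∀ x y y', f x (y + y') = f x y + f x y') : X →ₗ[ℤ] Y →ₗ[ℤ] Z :=
  letI F : X →+ Y →+ Z :=
    AddMonoidHom.mk' (fun x => AddMonoidHom.mk' (f x) (h₂ x))
      (fun x x' => AddMonoidHom.ext fun y => h₁ x x' y)
  { toFun := fun x => (F x).toIntLinearMap
    map_add' := fun x x' => LinearMap.ext fun y => h₁ x x' y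
    map_smul' := fun z x => LinearMap.ext fun y => by
      simpa using DFunLike.congr_fun (map_zsmul F z x) y }

@[simp] lemma mkBil_apply {X Y Z : Type*} [AddCommGroup X] [AddCommGroup Y] [AddCommGroup Z]
    (f : X → Y → Z) (h₁) (h₂) (x : X) (y : Y) : mkBil f h₁ h₂ x y = f x y := rfl

section Aux
variable {k A B M : Type*} [CommRing k] [CommRing A] [CommRing B]
    [Algebra k A] [Algebra k B] [Algebra A B]
    [AddCommGroup M] [Module A M]

noncomputable def piK (A : Type*) [CommRing A] [Algebra A B] [Module A M] :
    B ⊗[ℤ] M →ₗ[ℤ] B ⊗[A] M :=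
  TensorProduct.lift (mkBil (fun b m => b ⊗ₜ[A] m)
    (fun _ _ _ => add_tmul _ _ _) (fun _ _ _ => tmul_add _ _ _))

@[simp] lemma piK_tmul (b : B) (m : M) : piK A (b ⊗ₜ[ℤ] m) = b ⊗ₜ[A] m := rfl

lemma piK_surj : Function.Surjective (piK A (B := B) (M := M)) := by
  intro z
  induction z using TensorProduct.induction_on with
  | zero => exact ⟨0, map_zero _⟩
  | tmul b m => exact ⟨b ⊗ₜ[ℤ] m, rfl⟩
  | add x y hx hy =>
    obtain ⟨T, hT⟩ := hx; obtain ⟨S, hS⟩ := hy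
    exact ⟨T + S, by simp [hT, hS]⟩

variable (br : M → M → M)
    (hadd₁ : ∀ m m' n : M, br (m + m') n = br m n + br m' n)
    (hadd₂ : ∀ m n n' : M, br m (n + n') = br m n + br m n')

/-- The core bilinear map `(b⊗m, c⊗n) ↦ (b*c) ⊗ br m n` at the `ℤ`-tensor level. -/
noncomputable def LLK : B ⊗[ℤ] M →ₗ[ℤ] B ⊗[ℤ] M →ₗ[ℤ] B ⊗[ℤ] M :=
  TensorProduct.lift (mkBil
    (fun b m => TensorProduct.lift (mkBil (fun c n => (b * c) ⊗ₜ[ℤ] br m n)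
      (fun c c' n => by simp [mul_add, add_tmul])
      (fun c n n' => by simp [hadd₂, tmul_add])))
    (fun b b' m => TensorProduct.ext' fun c n => by simp [add_mul, add_tmul]; rfl)
    (fun b m m' => TensorProduct.ext' fun c n => by simp [hadd₁, tmul_add]; rfl))

@[simp] lemma LLK_tmul (b c : B) (m n : M) :
    LLK br hadd₁ hadd₂ (b ⊗ₜ[ℤ] m) (c ⊗ₜ[ℤ] n) = (b * c) ⊗ₜ[ℤ] br m n := rfl

variable (k) in
/-- `b ⊗ m ↦ ρ(b) ⊗ m` at the `ℤ`-tensor level. -/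
noncomputable def rhoK (ρ : Derivation k B B) : B ⊗[ℤ] M →ₗ[ℤ] B ⊗[ℤ] M :=
  TensorProduct.lift (mkBil (fun b m => ρ b ⊗ₜ[ℤ] m)
    (fun b b' m => by simp [add_tmul])
    (fun b m m' => by simp [tmul_add]))

@[simp] lemma rhoK_tmul (ρ : Derivation k B B) (b : B) (m : M) :
    rhoK k ρ (b ⊗ₜ[ℤ] m) = ρ b ⊗ₜ[ℤ] m := rfl

variable (ΓM : M →ₗ[A] Derivation k A A)

/-- `b ⊗ m ↦ b * f₀(Γ m a)` at the `ℤ`-tensor level. -/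
noncomputable def apK (a : A) : B ⊗[ℤ] M →ₗ[ℤ] B :=
  TensorProduct.lift (mkBil (fun b m => b * algebraMap A B (ΓM m a))
    (fun b b' m => by simp [add_mul])
    (fun b m m' => by simp [mul_add]))

@[simp] lemma apK_tmul (a : A) (b : B) (m : M) :
    apK ΓM a (b ⊗ₜ[ℤ] m) = b * algebraMap A B (ΓM m a) := rfl

lemma anchorPush_piK (a : A) (T : B ⊗[ℤ] M) :
    anchorPush k A B M ΓM a (piK A T) = apK ΓM a T := by
  induction T using TensorProduct.induction_on with
  | zero => simp
  | tmul b m => rfl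
  | add x y hx hy => simp [hx, hy]

/-- `c ⊗ n ↦ c * g (Γ n a)` for an additive `g : A →+ B`. -/
noncomputable def thK (g : A →+ B) (a : A) : B ⊗[ℤ] M →ₗ[ℤ] B :=
  TensorProduct.lift (mkBil (fun c n => c * g (ΓM n a))
    (fun c c' n => by simp [add_mul])
    (fun c n n' => by simp [mul_add, Derivation.add_apply, map_add]))

@[simp] lemma thK_tmul (g : A →+ B) (a : A) (c : B) (n : M) :
    thK ΓM g a (c ⊗ₜ[ℤ] n) = c * g (ΓM n a) := rfl

end Aux
set_option linter.unusedSectionVars false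

section Ker
variable {k A B M : Type*} [CommRing k] [CommRing A] [CommRing B]
    [Algebra k A] [Algebra k B] [Algebra A B]
    [AddCommGroup M] [Module A M]

variable (A B M) in
/-- Generators of the kernel of `B ⊗[ℤ] M → B ⊗[A] M`. -/
def lrGens : Set (B ⊗[ℤ] M) :=
  {x | ∃ (a : A) (b : B) (m : M), x = (algebraMap A B a * b) ⊗ₜ[ℤ] m - b ⊗ₜ[ℤ] (a • m)}

lemma lrGens_smul (a' : A) {x : B ⊗[ℤ] M} (hx : x ∈ lrGens A B M) :
    a' • x ∈ lrGens A B M := by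
  obtain ⟨a, b, m, rfl⟩ := hx
  refine ⟨a, algebraMap A B a' * b, m, ?_⟩
  rw [smul_sub, TensorProduct.smul_tmul', TensorProduct.smul_tmul']
  simp [Algebra.smul_def]
  ring_nf

lemma span_int_lrGens_smul_mem (a : A) {x : B ⊗[ℤ] M}
    (hx : x ∈ Submodule.span ℤ (lrGens A B M)) :
    a • x ∈ Submodule.span ℤ (lrGens A B M) := by
  induction hx using Submodule.span_induction with
  | mem y hy => exact Submodule.subset_span (lrGens_smul a hy)
  | zero => simp
  | add y z _ _ hy hz => rw [smul_add]; exact Submodule.add_mem _ hy hz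
  | smul z y _ hy => rw [smul_comm]; exact Submodule.smul_mem _ z hy

/-- `σ : B ⊗[A] M → (B ⊗[ℤ] M) / span A (gens)` splitting the projection. -/
noncomputable def sigmaQ :
    B ⊗[A] M →ₗ[A] (B ⊗[ℤ] M) ⧸ (Submodule.span A (lrGens A B M)) :=
  TensorProduct.lift
    { toFun := fun b =>
        { toFun := fun m => Submodule.Quotient.mk (b ⊗ₜ[ℤ] m)
          map_add' := fun m m' => by
            show Submodule.Quotient.mk (b ⊗ₜ[ℤ] (m + m')) = _
            rw [tmul_add]; rfl
          map_smul' := fun a m => by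
            show Submodule.Quotient.mk (b ⊗ₜ[ℤ] (a • m)) =
              a • Submodule.Quotient.mk (b ⊗ₜ[ℤ] m)
            rw [← Submodule.Quotient.mk_smul, TensorProduct.smul_tmul']
            rw [Submodule.Quotient.eq]
            have : b ⊗ₜ[ℤ] (a • m) - (a • b) ⊗ₜ[ℤ] m =
                -((algebraMap A B a * b) ⊗ₜ[ℤ] m - b ⊗ₜ[ℤ] (a • m)) := by
              rw [Algebra.smul_def]; abel
            rw [this]
            exact Submodule.neg_mem _ (Submodule.subset_span ⟨a, b, m, rfl⟩) }
      map_add' := fun b b' => LinearMap.ext fun m => by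
        show Submodule.Quotient.mk ((b + b') ⊗ₜ[ℤ] m) = _
        rw [add_tmul]; rfl
      map_smul' := fun a b => LinearMap.ext fun m => by
        show Submodule.Quotient.mk ((a • b) ⊗ₜ[ℤ] m) = _
        rw [← TensorProduct.smul_tmul', Submodule.Quotient.mk_smul]
        rfl }

lemma sigmaQ_piK (T : B ⊗[ℤ] M) :
    sigmaQ (piK A T) = Submodule.Quotient.mk T := by
  induction T using TensorProduct.induction_on with
  | zero => simp
  | tmul b m => rfl
  | add x y hx hy => rw [map_add, map_add, hx, hy]; rfl

lemma ker_piK_le_span {T : B ⊗[ℤ] M} (hT : piK A T = 0) :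
    T ∈ Submodule.span ℤ (lrGens A B M) := by
  have h1 : T ∈ Submodule.span A (lrGens A B M) := by
    have h2 := sigmaQ_piK (A := A) T
    rw [hT, map_zero] at h2
    exact (Submodule.Quotient.mk_eq_zero _).mp h2.symm
  -- span A = span ℤ since gens are closed under A-smul
  clear hT
  induction h1 using Submodule.span_induction with
  | mem y hy => exact Submodule.subset_span hy
  | zero => simp
  | add y z _ _ hy hz => exact Submodule.add_mem _ hy hz
  | smul a y _ hy => exact span_int_lrGens_smul_mem a hy

end Ker
section Core
variable {k A B M : Type*} [CommRing k] [CommRing A] [CommRing B]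
    [Algebra k A] [Algebra k B] [Algebra A B]
    [AddCommGroup M] [Module A M]
    (ΓM : M →ₗ[A] Derivation k A A)
    (br : M → M → M)
    (hadd₁ : ∀ m m' n : M, br (m + m') n = br m n + br m' n)
    (hadd₂ : ∀ m n n' : M, br m (n + n') = br m n + br m n')

/-- `ρ ∘ f₀` as an additive map `A →+ B`. -/
def rhoComp (ρ : Derivation k B B) : A →+ B :=
  AddMonoidHom.mk' (fun a => ρ (algebraMap A B a))
    (by intro a a'; show ρ (algebraMap A B (a + a')) = _; rw [map_add, map_add])

@[simp] lemma rhoComp_apply (ρ : Derivation k B B) (a : A) :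
    rhoComp ρ a = ρ (algebraMap A B a) := rfl

lemma apK_add_fst (a a' : A) (T : B ⊗[ℤ] M) :
    apK ΓM (a + a') T = apK ΓM a T + apK ΓM a' T := by
  induction T using TensorProduct.induction_on with
  | zero => simp
  | tmul b m => simp [mul_add]
  | add x y hx hy => rw [map_add, map_add, map_add, hx, hy]; ring

/-- `a' ↦ apK ΓM a' T` as an additive map `A →+ B`. -/
noncomputable def apHom (T : B ⊗[ℤ] M) : A →+ B :=
  AddMonoidHom.mk' (fun a => apK ΓM a T) (fun a a' => apK_add_fst ΓM a a' T)

@[simp] lemma apHom_apply (T : B ⊗[ℤ] M) (a : A) : apHom ΓM T a = apK ΓM a T := rfl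

/-- The second component of the bracket, on `ℤ`-tensor representatives. -/
noncomputable def phiF (ρ ρ' : Derivation k B B) (T S : B ⊗[ℤ] M) : B ⊗[A] M :=
  piK A (LLK br hadd₁ hadd₂ T S) + piK A (rhoK k ρ S) - piK A (rhoK k ρ' T)

variable (hanti : ∀ m n : M, br m n = - br n m)
    (hleib : ∀ (m n : M) (a : A), br m (a • n) = ΓM m a • n + a • br m n)

include hanti hleib in
lemma br_smul_left (a : A) (m n : M) :
    br (a • m) n = a • br m n - ΓM n a • m := by
  rw [hanti, hleib, hanti n m, smul_neg, neg_add, neg_neg, sub_eq_add_neg]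
  abel

include hanti hleib in
/-- `LLK` applied to a right-slot kernel generator. -/
lemma G1 (a : A) (c : B) (n : M) (T : B ⊗[ℤ] M) :
    piK A (LLK br hadd₁ hadd₂ T ((algebraMap A B a * c) ⊗ₜ[ℤ] n - c ⊗ₜ[ℤ] (a • n))) =
      -((apK ΓM a T * c) ⊗ₜ[A] n) := by
  induction T using TensorProduct.induction_on with
  | zero => simp
  | tmul b m =>
    rw [map_sub, LLK_tmul, LLK_tmul, map_sub, piK_tmul, piK_tmul, hleib, tmul_add,
      ← smul_tmul, ← smul_tmul, Algebra.smul_def, Algebra.smul_def, apK_tmul]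
    have h1 : b * (algebraMap A B a * c) = algebraMap A B a * (b * c) := by ring
    have h2 : algebraMap A B ((ΓM m) a) * (b * c) = b * algebraMap A B ((ΓM m) a) * c := by
      ring
    rw [h1, h2]
    abel
  | add x y hx hy =>
    simp only [map_add, LinearMap.add_apply, hx, hy, add_mul, add_tmul]
    abel

include hanti hleib in
/-- `LLK` applied to a left-slot kernel generator. -/
lemma G2 (a : A) (b : B) (m : M) (S : B ⊗[ℤ] M) :
    piK A (LLK br hadd₁ hadd₂ ((algebraMap A B a * b) ⊗ₜ[ℤ] m - b ⊗ₜ[ℤ] (a • m)) S) =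
      (b * apK ΓM a S) ⊗ₜ[A] m := by
  induction S using TensorProduct.induction_on with
  | zero => simp
  | tmul c n =>
    rw [map_sub, LinearMap.sub_apply, LLK_tmul, LLK_tmul, map_sub, piK_tmul, piK_tmul,
      br_smul_left ΓM br hanti hleib, tmul_sub, ← smul_tmul, ← smul_tmul,
      Algebra.smul_def, Algebra.smul_def, apK_tmul]
    have h1 : algebraMap A B a * b * c = algebraMap A B a * (b * c) := by ring
    have h2 : algebraMap A B ((ΓM n) a) * (b * c) = b * (c * algebraMap A B ((ΓM n) a)) := by
      ring
    rw [h1, h2]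
    abel
  | add x y hx hy =>
    simp only [map_add, LinearMap.add_apply, hx, hy, mul_add, tmul_add, add_tmul]

/-- `rhoK` applied to a (right-slot) kernel generator. -/
lemma PR1 (ρ : Derivation k B B) (a : A) (c : B) (n : M) :
    piK A (rhoK k ρ ((algebraMap A B a * c) ⊗ₜ[ℤ] n - c ⊗ₜ[ℤ] (a • n))) =
      (c * ρ (algebraMap A B a)) ⊗ₜ[A] n := by
  rw [map_sub, rhoK_tmul, rhoK_tmul, map_sub, piK_tmul, piK_tmul, Derivation.leibniz,
    ← smul_tmul, Algebra.smul_def]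
  simp only [smul_eq_mul, Algebra.algebraMap_self, RingHom.id_apply, Algebra.smul_def]
  rw [add_tmul]
  abel

include hanti hleib in
lemma KL_right (ρ : Derivation k B B) (T : B ⊗[ℤ] M)
    (hc : ∀ a : A, ρ (algebraMap A B a) = apK ΓM a T)
    {S₀ : B ⊗[ℤ] M} (hS₀ : S₀ ∈ Submodule.span ℤ (lrGens A B M)) :
    piK A (LLK br hadd₁ hadd₂ T S₀) + piK A (rhoK k ρ S₀) = 0 := by
  induction hS₀ using Submodule.span_induction with
  | mem y hy =>
    obtain ⟨a, c, n, rfl⟩ := hy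
    rw [G1 ΓM br hadd₁ hadd₂ hanti hleib, PR1, hc, mul_comm]
    abel
  | zero => simp
  | add y z _ _ hy hz =>
    simp only [map_add, LinearMap.add_apply]
    rw [add_eq_zero_iff_eq_neg] at hy hz ⊢
    rw [hy, hz]
    abel
  | smul z y _ hy =>
    rw [map_smul, map_smul, map_smul, map_smul, ← smul_add, hy, smul_zero]

include hanti hleib in
lemma KL_left (ρ' : Derivation k B B) (S : B ⊗[ℤ] M)
    (hc : ∀ a : A, ρ' (algebraMap A B a) = apK ΓM a S)
    {T₀ : B ⊗[ℤ] M} (hT₀ : T₀ ∈ Submodule.span ℤ (lrGens A B M)) :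
    piK A (LLK br hadd₁ hadd₂ T₀ S) - piK A (rhoK k ρ' T₀) = 0 := by
  induction hT₀ using Submodule.span_induction with
  | mem y hy =>
    obtain ⟨a, b, m, rfl⟩ := hy
    rw [G2 ΓM br hadd₁ hadd₂ hanti hleib, PR1, hc, sub_self]
  | zero => simp
  | add y z _ _ hy hz =>
    simp only [map_add, LinearMap.add_apply]
    rw [sub_eq_zero] at hy hz ⊢
    rw [hy, hz]
  | smul z y _ hy =>
    rw [map_smul, LinearMap.smul_apply, map_smul, map_smul, map_smul]
    exact (smul_sub z _ _).symm.trans (by rw [hy, smul_zero])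

include hanti hleib in
/-- The representative-independence (well-definedness) of the bracket's second component. -/
lemma phiF_welldef (ρ ρ' : Derivation k B B) (T T' S S' : B ⊗[ℤ] M)
    (hT : piK A T = piK A T') (hS : piK A S = piK A S')
    (hρ : ∀ a : A, ρ (algebraMap A B a) = apK ΓM a T')
    (hρ' : ∀ a : A, ρ' (algebraMap A B a) = apK ΓM a S) :
    phiF (A := A) br hadd₁ hadd₂ ρ ρ' T S = phiF (A := A) br hadd₁ hadd₂ ρ ρ' T' S' := by
  have hT0 : piK A (T - T') = 0 := by rw [map_sub, hT, sub_self]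
  have hS0 : piK A (S - S') = 0 := by rw [map_sub, hS, sub_self]
  have hTk : T - T' ∈ Submodule.span ℤ (lrGens A B M) := ker_piK_le_span hT0
  have hSk : S - S' ∈ Submodule.span ℤ (lrGens A B M) := ker_piK_le_span hS0
  have e1 := KL_left ΓM br hadd₁ hadd₂ hanti hleib ρ' S hρ' hTk
  have e2 := KL_right ΓM br hadd₁ hadd₂ hanti hleib ρ T' hρ hSk
  simp only [map_sub, LinearMap.sub_apply] at e1 e2
  unfold phiF
  rw [← sub_eq_zero]
  rw [show piK A (LLK br hadd₁ hadd₂ T S) + piK A (rhoK k ρ S) - piK A (rhoK k ρ' T) -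
    (piK A (LLK br hadd₁ hadd₂ T' S') + piK A (rhoK k ρ S') - piK A (rhoK k ρ' T')) =
    (piK A (LLK br hadd₁ hadd₂ T S) - piK A (LLK br hadd₁ hadd₂ T' S) -
      (piK A (rhoK k ρ' T) - piK A (rhoK k ρ' T'))) +
    (piK A (LLK br hadd₁ hadd₂ T' S) - piK A (LLK br hadd₁ hadd₂ T' S') +
      (piK A (rhoK k ρ S) - piK A (rhoK k ρ S'))) by abel, e1, e2, add_zero]

end Core

section Core2
variable {k A B M : Type*} [CommRing k] [CommRing A] [CommRing B]
    [Algebra k A] [Algebra k B] [Algebra A B]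
    [AddCommGroup M] [Module A M]
    (ΓM : M →ₗ[A] Derivation k A A)
    (br : M → M → M)
    (hadd₁ : ∀ m m' n : M, br (m + m') n = br m n + br m' n)
    (hadd₂ : ∀ m n n' : M, br m (n + n') = br m n + br m n')

lemma E1 (ρ : Derivation k B B) (a : A) (S : B ⊗[ℤ] M) :
    apK ΓM a (rhoK k ρ S) = ρ (apK ΓM a S) - thK ΓM (rhoComp ρ) a S := by
  induction S using TensorProduct.induction_on with
  | zero => simp
  | tmul c n =>
    rw [rhoK_tmul, apK_tmul, apK_tmul, thK_tmul, Derivation.leibniz, rhoComp_apply]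
    simp only [smul_eq_mul]
    ring
  | add x y hx hy => rw [map_add, map_add, map_add, map_add, map_add, hx, hy]; ring

lemma thK_hom_add (g g' : A →+ B) (a : A) (S : B ⊗[ℤ] M) :
    thK ΓM (g + g') a S = thK ΓM g a S + thK ΓM g' a S := by
  induction S using TensorProduct.induction_on with
  | zero => simp
  | tmul c n => simp only [thK_tmul, AddMonoidHom.add_apply, mul_add]
  | add x y hx hy => rw [map_add, map_add, map_add, hx, hy]; ring

lemma apHom_add (T T' : B ⊗[ℤ] M) :
    apHom ΓM (T + T') = apHom ΓM T + apHom ΓM T' := by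
  ext a
  simp only [apHom_apply, AddMonoidHom.add_apply, map_add]

lemma apHom_zero : apHom ΓM (0 : B ⊗[ℤ] M) = 0 := by
  ext a; simp [apHom_apply]

lemma thK_hom_zero (a : A) (S : B ⊗[ℤ] M) : thK ΓM (0 : A →+ B) a S = 0 := by
  induction S using TensorProduct.induction_on with
  | zero => simp
  | tmul c n => simp
  | add x y hx hy => rw [map_add, hx, hy, add_zero]

variable (hΓlie : ∀ m n : M, ΓM (br m n) = ⁅ΓM m, ΓM n⁆)

include hΓlie in
lemma E3 (a : A) (T S : B ⊗[ℤ] M) :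
    apK ΓM a (LLK br hadd₁ hadd₂ T S) =
      thK ΓM (apHom ΓM T) a S - thK ΓM (apHom ΓM S) a T := by
  induction T using TensorProduct.induction_on with
  | zero => simp [apHom_zero, thK_hom_zero]
  | tmul b m =>
    induction S using TensorProduct.induction_on with
    | zero => simp [apHom_zero, thK_hom_zero]
    | tmul c n =>
      rw [LLK_tmul, apK_tmul, thK_tmul, thK_tmul, hΓlie, Derivation.commutator_apply,
        map_sub, apHom_apply, apHom_apply, apK_tmul, apK_tmul, mul_sub]
      ring
    | add x y hx hy =>
      rw [map_add, map_add, map_add, apHom_add, thK_hom_add, hx, hy]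
      ring
  | add x y hx hy =>
    rw [map_add, LinearMap.add_apply, map_add, apHom_add, thK_hom_add, map_add, hx, hy]
    ring

include hΓlie in
/-- Anchor-compatibility of the bracket: membership of the bracket in the pullback. -/
lemma memb (ρ ρ' : Derivation k B B) (T S : B ⊗[ℤ] M)
    (hρ : ∀ a : A, ρ (algebraMap A B a) = apK ΓM a T)
    (hρ' : ∀ a : A, ρ' (algebraMap A B a) = apK ΓM a S) (a : A) :
    ⁅ρ, ρ'⁆ (algebraMap A B a) =
      anchorPush k A B M ΓM a (phiF (A := A) br hadd₁ hadd₂ ρ ρ' T S) := by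
  have hg : rhoComp (k := k) ρ = apHom ΓM T := AddMonoidHom.ext hρ
  have hg' : rhoComp (k := k) ρ' = apHom ΓM S := AddMonoidHom.ext hρ'
  rw [Derivation.commutator_apply, hρ', hρ]
  unfold phiF
  rw [map_sub, map_add, anchorPush_piK, anchorPush_piK, anchorPush_piK,
    E1, E1, E3 ΓM br hadd₁ hadd₂ hΓlie, hg, hg']
  abel

end Core2

section Core3
variable {k A B M : Type*} [CommRing k] [CommRing A] [CommRing B]
    [Algebra k A] [Algebra k B] [Algebra A B]
    [AddCommGroup M] [Module A M]
    (br : M → M → M)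
    (hadd₁ : ∀ m m' n : M, br (m + m') n = br m n + br m' n)
    (hadd₂ : ∀ m n n' : M, br m (n + n') = br m n + br m n')

lemma piK_smul (b : B) (S : B ⊗[ℤ] M) : piK A (b • S) = b • piK A S := by
  induction S using TensorProduct.induction_on with
  | zero => simp
  | tmul c n => rw [TensorProduct.smul_tmul', piK_tmul, piK_tmul, TensorProduct.smul_tmul']
  | add x y hx hy => rw [smul_add, map_add, map_add, hx, hy, smul_add]

variable (hanti : ∀ m n : M, br m n = - br n m)

include hanti in
lemma LLK_skew (T S : B ⊗[ℤ] M) :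
    piK A (LLK br hadd₁ hadd₂ T S) = -piK A (LLK br hadd₁ hadd₂ S T) := by
  induction T using TensorProduct.induction_on with
  | zero => simp
  | tmul b m =>
    induction S using TensorProduct.induction_on with
    | zero => simp
    | tmul c n =>
      rw [LLK_tmul, LLK_tmul, piK_tmul, piK_tmul, hanti, mul_comm, tmul_neg]
    | add x y hx hy =>
      simp only [map_add, LinearMap.add_apply, hx, hy]
      abel
  | add x y hx hy =>
    simp only [map_add, LinearMap.add_apply, hx, hy]
    abel

lemma rho_LLK (ρ : Derivation k B B) (T S : B ⊗[ℤ] M) :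
    piK A (rhoK k ρ (LLK br hadd₁ hadd₂ T S)) =
      piK A (LLK br hadd₁ hadd₂ (rhoK k ρ T) S) +
        piK A (LLK br hadd₁ hadd₂ T (rhoK k ρ S)) := by
  induction T using TensorProduct.induction_on with
  | zero => simp
  | tmul b m =>
    induction S using TensorProduct.induction_on with
    | zero => simp
    | tmul c n =>
      rw [LLK_tmul, rhoK_tmul, rhoK_tmul, rhoK_tmul, LLK_tmul, LLK_tmul, piK_tmul,
        piK_tmul, piK_tmul, Derivation.leibniz]
      simp only [smul_eq_mul]
      rw [add_tmul, mul_comm c (ρ b)]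
      abel
    | add x y hx hy =>
      simp only [map_add, LinearMap.add_apply, hx, hy]
      abel
  | add x y hx hy =>
    simp only [map_add, LinearMap.add_apply, hx, hy]
    abel

lemma rho_rho (ρ ρ' : Derivation k B B) (U : B ⊗[ℤ] M) :
    piK A (rhoK k ⁅ρ, ρ'⁆ U) =
      piK A (rhoK k ρ (rhoK k ρ' U)) - piK A (rhoK k ρ' (rhoK k ρ U)) := by
  induction U using TensorProduct.induction_on with
  | zero => simp
  | tmul d p =>
    rw [rhoK_tmul, rhoK_tmul, rhoK_tmul, rhoK_tmul, rhoK_tmul, piK_tmul, piK_tmul,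
      piK_tmul, Derivation.commutator_apply, sub_tmul]
  | add x y hx hy =>
    simp only [map_add, hx, hy]
    abel

variable (hjac : ∀ m n p : M, br m (br n p) = br (br m n) p + br n (br m p))

include hjac in
lemma Ljac (T S U : B ⊗[ℤ] M) :
    piK A (LLK br hadd₁ hadd₂ T (LLK br hadd₁ hadd₂ S U)) =
      piK A (LLK br hadd₁ hadd₂ (LLK br hadd₁ hadd₂ T S) U) +
        piK A (LLK br hadd₁ hadd₂ S (LLK br hadd₁ hadd₂ T U)) := by
  induction T using TensorProduct.induction_on with
  | zero => simp
  | tmul b m =>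
    induction S using TensorProduct.induction_on with
    | zero => simp
    | tmul c n =>
      induction U using TensorProduct.induction_on with
      | zero => simp
      | tmul d p =>
        simp only [LLK_tmul, piK_tmul]
        rw [hjac, tmul_add]
        exact congrArg₂ (· + ·) (by rw [mul_assoc]) (by ring_nf)
      | add x y hx hy =>
        simp only [map_add, LinearMap.add_apply, hx, hy]
        abel
    | add x y hx hy =>
      simp only [map_add, LinearMap.add_apply, hx, hy]
      abel
  | add x y hx hy =>
    simp only [map_add, LinearMap.add_apply, hx, hy]
    abel

lemma LLK_smul_right (b : B) (T S : B ⊗[ℤ] M) :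
    piK A (LLK br hadd₁ hadd₂ T (b • S)) = b • piK A (LLK br hadd₁ hadd₂ T S) := by
  induction T using TensorProduct.induction_on with
  | zero => simp
  | tmul b' m =>
    induction S using TensorProduct.induction_on with
    | zero => simp
    | tmul c n =>
      rw [TensorProduct.smul_tmul', LLK_tmul, LLK_tmul, piK_tmul, piK_tmul,
        TensorProduct.smul_tmul', smul_eq_mul, smul_eq_mul]
      rw [show b' * (b * c) = b * (b' * c) by ring]
    | add x y hx hy =>
      simp only [smul_add, map_add, hx, hy]
  | add x y hx hy =>
    simp only [map_add, LinearMap.add_apply, hx, hy, smul_add]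

lemma rho_deriv_smul (ρ : Derivation k B B) (b : B) (S : B ⊗[ℤ] M) :
    piK A (rhoK k ρ (b • S)) = ρ b • piK A S + b • piK A (rhoK k ρ S) := by
  induction S using TensorProduct.induction_on with
  | zero => simp
  | tmul c n =>
    rw [TensorProduct.smul_tmul', rhoK_tmul, rhoK_tmul, piK_tmul, piK_tmul, piK_tmul,
      smul_eq_mul, Derivation.leibniz, TensorProduct.smul_tmul', TensorProduct.smul_tmul',
      smul_eq_mul, smul_eq_mul, add_tmul, smul_eq_mul, mul_comm (ρ b) c]
    abel
  | add x y hx hy =>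
    simp only [smul_add, map_add, hx, hy]
    abel

lemma rho_smul_rho (ρ' : Derivation k B B) (b : B) (T : B ⊗[ℤ] M) :
    piK A (rhoK k (b • ρ') T) = b • piK A (rhoK k ρ' T) := by
  induction T using TensorProduct.induction_on with
  | zero => simp
  | tmul c n =>
    rw [rhoK_tmul, rhoK_tmul, piK_tmul, piK_tmul, Derivation.smul_apply,
      TensorProduct.smul_tmul']
  | add x y hx hy =>
    simp only [map_add, hx, hy, smul_add]

lemma rho_add_rho (ρ₁ ρ₂ : Derivation k B B) (S : B ⊗[ℤ] M) :
    piK A (rhoK k (ρ₁ + ρ₂) S) = piK A (rhoK k ρ₁ S) + piK A (rhoK k ρ₂ S) := by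
  induction S using TensorProduct.induction_on with
  | zero => simp
  | tmul c n =>
    rw [rhoK_tmul, rhoK_tmul, rhoK_tmul, piK_tmul, piK_tmul, piK_tmul,
      Derivation.add_apply, add_tmul]
  | add x y hx hy =>
    simp only [map_add, hx, hy]
    abel

end Core3

section Core4
variable {k A B M : Type*} [CommRing k] [CommRing A] [CommRing B]
    [Algebra k A] [Algebra k B] [Algebra A B]
    [AddCommGroup M] [Module A M]
    (br : M → M → M)
    (hadd₁ : ∀ m m' n : M, br (m + m') n = br m n + br m' n)
    (hadd₂ : ∀ m n n' : M, br m (n + n') = br m n + br m n')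

lemma phiF_add_left (ρ₁ ρ₂ ρ' : Derivation k B B) (T₁ T₂ S : B ⊗[ℤ] M) :
    phiF (A := A) br hadd₁ hadd₂ (ρ₁ + ρ₂) ρ' (T₁ + T₂) S =
      phiF (A := A) br hadd₁ hadd₂ ρ₁ ρ' T₁ S + phiF (A := A) br hadd₁ hadd₂ ρ₂ ρ' T₂ S := by
  unfold phiF
  rw [rho_add_rho]
  simp only [map_add, LinearMap.add_apply]
  abel

lemma phiF_add_right (ρ ρ₁ ρ₂ : Derivation k B B) (T S₁ S₂ : B ⊗[ℤ] M) :
    phiF (A := A) br hadd₁ hadd₂ ρ (ρ₁ + ρ₂) T (S₁ + S₂) =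
      phiF (A := A) br hadd₁ hadd₂ ρ ρ₁ T S₁ + phiF (A := A) br hadd₁ hadd₂ ρ ρ₂ T S₂ := by
  unfold phiF
  rw [rho_add_rho]
  simp only [map_add, LinearMap.add_apply]
  abel

variable (hanti : ∀ m n : M, br m n = - br n m)

include hanti in
lemma phiF_skew (ρ ρ' : Derivation k B B) (T S : B ⊗[ℤ] M) :
    phiF (A := A) br hadd₁ hadd₂ ρ ρ' T S = -phiF (A := A) br hadd₁ hadd₂ ρ' ρ S T := by
  unfold phiF
  rw [LLK_skew br hadd₁ hadd₂ hanti T S]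
  abel

variable (hjac : ∀ m n p : M, br m (br n p) = br (br m n) p + br n (br m p))

include hanti hjac in
lemma phiF_jacobi (ρ ρ' ρ'' : Derivation k B B) (T S U : B ⊗[ℤ] M) :
    phiF (A := A) br hadd₁ hadd₂ ρ ⁅ρ', ρ''⁆ T
        (LLK br hadd₁ hadd₂ S U + rhoK k ρ' U - rhoK k ρ'' S) =
      phiF (A := A) br hadd₁ hadd₂ ⁅ρ, ρ'⁆ ρ''
          (LLK br hadd₁ hadd₂ T S + rhoK k ρ S - rhoK k ρ' T) U +
        phiF (A := A) br hadd₁ hadd₂ ρ' ⁅ρ, ρ''⁆ S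
          (LLK br hadd₁ hadd₂ T U + rhoK k ρ U - rhoK k ρ'' T) := by
  unfold phiF
  simp only [map_add, map_sub, LinearMap.add_apply, LinearMap.sub_apply]
  rw [Ljac br hadd₁ hadd₂ hjac T S U, rho_rho ρ' ρ'' T, rho_rho ρ ρ' U, rho_rho ρ ρ'' S,
    rho_LLK br hadd₁ hadd₂ ρ S U, rho_LLK br hadd₁ hadd₂ ρ'' T S,
    rho_LLK br hadd₁ hadd₂ ρ' T U, LLK_skew br hadd₁ hadd₂ hanti S (rhoK k ρ'' T)]
  abel

lemma phiF_leib (ρ ρ' : Derivation k B B) (b : B) (T S : B ⊗[ℤ] M) :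
    phiF (A := A) br hadd₁ hadd₂ ρ (b • ρ') T (b • S) =
      ρ b • piK A S + b • phiF (A := A) br hadd₁ hadd₂ ρ ρ' T S := by
  unfold phiF
  rw [LLK_smul_right, rho_deriv_smul, rho_smul_rho, smul_sub, smul_add]
  abel

lemma der_bracket_smul (ρ ρ' : Derivation k B B) (b : B) :
    ⁅ρ, b • ρ'⁆ = ρ b • ρ' + b • ⁅ρ, ρ'⁆ := by
  ext x
  simp only [Derivation.commutator_apply, Derivation.smul_apply, Derivation.add_apply,
    smul_eq_mul, Derivation.leibniz]
  ring

end Core4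
/-- Let `(A, M)` be a (dg) Lie–Rinehart pair and `f₀ : A → B` a morphism of
cdgas (encoded by the algebra structure `Algebra A B`).  On the pullback
`f₀^!M = Der(B) ×_{Der(A,B)} (B ⊗_A M)` the bracket
`[(ρ, Σ bᵢ⊗mᵢ), (ρ′, Σ cⱼ⊗nⱼ)] = ([ρ,ρ′], Σ bᵢcⱼ⊗[mᵢ,nⱼ] + Σ ρ(cⱼ)⊗nⱼ − Σ ρ′(bᵢ)⊗mᵢ)`
is well defined, and together with the anchor given by the projection to `Der(B)` it makes
`(B, f₀^!M)` a Lie–Rinehart pair: the bracket is antisymmetric, satisfies the Jacobi identity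
and the Leibniz rule, and the projection to `Der(B)` is a morphism of Lie algebras. -/
theorem stmt4 (k A B M : Type*) [CommRing k] [CommRing A] [CommRing B]
    [Algebra k A] [Algebra k B] [Algebra A B]
    [AddCommGroup M] [Module A M]
    (ΓM : M →ₗ[A] Derivation k A A)
    (br : M → M → M)
    -- Lie–Rinehart axioms for `(A, M)`
    (hadd₁ : ∀ m m' n : M, br (m + m') n = br m n + br m' n)
    (hadd₂ : ∀ m n n' : M, br m (n + n') = br m n + br m n')
    (hanti : ∀ m n : M, br m n = - br n m)
    (hjac : ∀ m n p : M, br m (br n p) = br (br m n) p + br n (br m p))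
    (hleib : ∀ (m n : M) (a : A), br m (a • n) = ΓM m a • n + a • br m n)
    (hΓlie : ∀ m n : M, ΓM (br m n) = ⁅ΓM m, ΓM n⁆) :
    ∃ BR : ↥(lrPullback k A B M ΓM) → ↥(lrPullback k A B M ΓM) → ↥(lrPullback k A B M ΓM),
      -- the bracket is given on representatives by the stated formula
      (∀ (ρ ρ' : Derivation k B B) (b c : B) (m n : M)
          (hx : (ρ, b ⊗ₜ[A] m) ∈ lrPullback k A B M ΓM)
          (hy : (ρ', c ⊗ₜ[A] n) ∈ lrPullback k A B M ΓM),
          (BR ⟨(ρ, b ⊗ₜ[A] m), hx⟩ ⟨(ρ', c ⊗ₜ[A] n), hy⟩ :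
              Derivation k B B × (B ⊗[A] M)) =
            (⁅ρ, ρ'⁆, (b * c) ⊗ₜ[A] br m n + ρ c ⊗ₜ[A] n - ρ' b ⊗ₜ[A] m)) ∧
      -- bilinearity (additivity in each slot)
      (∀ x x' y, BR (x + x') y = BR x y + BR x' y) ∧
      (∀ x y y', BR x (y + y') = BR x y + BR x y') ∧
      -- antisymmetry
      (∀ x y, BR x y = - BR y x) ∧
      -- Jacobi identity
      (∀ x y z, BR x (BR y z) = BR (BR x y) z + BR y (BR x z)) ∧
      -- Leibniz rule with the anchor = projection to `Der(B)`
      (∀ (x y : ↥(lrPullback k A B M ΓM)) (b : B),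
          BR x (b • y) = ((x : Derivation k B B × (B ⊗[A] M)).1 b) • y + b • BR x y) ∧
      -- the anchor is a morphism of Lie algebras
      (∀ x y, ((BR x y : ↥(lrPullback k A B M ΓM)) :
          Derivation k B B × (B ⊗[A] M)).1 =
        ⁅(x : Derivation k B B × (B ⊗[A] M)).1, (y : Derivation k B B × (B ⊗[A] M)).1⁆) := by
  classical
  set P := lrPullback k A B M ΓM with hP
  let l : B ⊗[A] M → B ⊗[ℤ] M := Function.surjInv piK_surj
  have hl : ∀ z : B ⊗[A] M, piK A (l z) = z := fun z => Function.surjInv_eq piK_surj z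
  have hmem : ∀ x : ↥P, ∀ a : A,
      (x : Derivation k B B × (B ⊗[A] M)).1 (algebraMap A B a) =
        anchorPush k A B M ΓM a (x : Derivation k B B × (B ⊗[A] M)).2 := fun x a => x.2 a
  have hcompT : ∀ (x : ↥P) (T : B ⊗[ℤ] M), piK A T = (x : Derivation k B B × (B ⊗[A] M)).2 →
      ∀ a : A, (x : Derivation k B B × (B ⊗[A] M)).1 (algebraMap A B a) = apK ΓM a T := by
    intro x T hT a
    rw [hmem x a, ← hT, anchorPush_piK]
  have rep : ∀ (x y : ↥P) (T S : B ⊗[ℤ] M),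
      piK A T = (x : Derivation k B B × (B ⊗[A] M)).2 →
      piK A S = (y : Derivation k B B × (B ⊗[A] M)).2 →
      phiF (A := A) br hadd₁ hadd₂ (x : Derivation k B B × (B ⊗[A] M)).1
          (y : Derivation k B B × (B ⊗[A] M)).1
          (l (x : Derivation k B B × (B ⊗[A] M)).2) (l (y : Derivation k B B × (B ⊗[A] M)).2) =
        phiF (A := A) br hadd₁ hadd₂ (x : Derivation k B B × (B ⊗[A] M)).1
          (y : Derivation k B B × (B ⊗[A] M)).1 T S := by
    intro x y T S hT hS
    exact phiF_welldef ΓM br hadd₁ hadd₂ hanti hleib _ _ _ T _ S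
      (by rw [hl, hT]) (by rw [hl, hS]) (hcompT x T hT) (hcompT y _ (hl _))
  refine ⟨fun x y =>
    ⟨(⁅(x : Derivation k B B × (B ⊗[A] M)).1, (y : Derivation k B B × (B ⊗[A] M)).1⁆,
      phiF (A := A) br hadd₁ hadd₂ (x : Derivation k B B × (B ⊗[A] M)).1
        (y : Derivation k B B × (B ⊗[A] M)).1
        (l (x : Derivation k B B × (B ⊗[A] M)).2) (l (y : Derivation k B B × (B ⊗[A] M)).2)),
      fun a => memb ΓM br hadd₁ hadd₂ hΓlie _ _ _ _
        (hcompT x _ (hl _)) (hcompT y _ (hl _)) a⟩, ?_, ?_, ?_, ?_, ?_, ?_, ?_⟩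
  -- (1) formula on representatives
  · intro ρ ρ' b c m n hx hy
    have h2 := rep ⟨(ρ, b ⊗ₜ[A] m), hx⟩ ⟨(ρ', c ⊗ₜ[A] n), hy⟩ (b ⊗ₜ[ℤ] m) (c ⊗ₜ[ℤ] n) rfl rfl
    dsimp only at h2 ⊢
    refine Prod.ext rfl ?_
    show phiF (A := A) br hadd₁ hadd₂ ρ ρ' (l (b ⊗ₜ[A] m)) (l (c ⊗ₜ[A] n)) = _
    rw [h2]
    unfold phiF
    rw [LLK_tmul, rhoK_tmul, rhoK_tmul, piK_tmul, piK_tmul, piK_tmul]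
  -- (2) additivity in the first slot
  · intro x x' y
    apply Subtype.ext
    have e := rep (x + x') y (l (x : Derivation k B B × (B ⊗[A] M)).2 +
        l (x' : Derivation k B B × (B ⊗[A] M)).2) (l (y : Derivation k B B × (B ⊗[A] M)).2)
      (by rw [map_add, hl, hl, Submodule.coe_add, Prod.snd_add]) (hl _)
    dsimp only at e ⊢
    refine Prod.ext ?_ ?_
    · show ⁅((x + x' : ↥P) : Derivation k B B × (B ⊗[A] M)).1, _⁆ = _
      rw [Submodule.coe_add, Prod.fst_add, add_lie]
      rfl
    · show phiF (A := A) br hadd₁ hadd₂ _ _ _ _ = _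
      rw [e, Submodule.coe_add, Prod.fst_add, phiF_add_left]
      rfl
  -- (3) additivity in the second slot
  · intro x y y'
    apply Subtype.ext
    have e := rep x (y + y') (l (x : Derivation k B B × (B ⊗[A] M)).2)
      (l (y : Derivation k B B × (B ⊗[A] M)).2 + l (y' : Derivation k B B × (B ⊗[A] M)).2)
      (hl _) (by rw [map_add, hl, hl, Submodule.coe_add, Prod.snd_add])
    dsimp only at e ⊢
    refine Prod.ext ?_ ?_
    · show ⁅_, ((y + y' : ↥P) : Derivation k B B × (B ⊗[A] M)).1⁆ = _
      rw [Submodule.coe_add, Prod.fst_add, lie_add]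
      rfl
    · show phiF (A := A) br hadd₁ hadd₂ _ _ _ _ = _
      rw [e, Submodule.coe_add, Prod.fst_add, phiF_add_right]
      rfl
  -- (4) antisymmetry
  · intro x y
    apply Subtype.ext
    dsimp only
    refine Prod.ext ?_ ?_
    · show ⁅_, _⁆ = _
      rw [Submodule.coe_neg, Prod.fst_neg, ← lie_skew]
    · show phiF (A := A) br hadd₁ hadd₂ _ _ _ _ = _
      rw [phiF_skew br hadd₁ hadd₂ hanti, Submodule.coe_neg, Prod.snd_neg]
  -- (5) Jacobi identity
  · intro x y z
    apply Subtype.ext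
    dsimp only
    set ρ := (x : Derivation k B B × (B ⊗[A] M)).1
    set ρ' := (y : Derivation k B B × (B ⊗[A] M)).1
    set ρ'' := (z : Derivation k B B × (B ⊗[A] M)).1
    set T := l (x : Derivation k B B × (B ⊗[A] M)).2
    set S := l (y : Derivation k B B × (B ⊗[A] M)).2
    set U := l (z : Derivation k B B × (B ⊗[A] M)).2
    refine Prod.ext (leibniz_lie ρ ρ' ρ'') ?_
    have hW₁ : piK A (LLK br hadd₁ hadd₂ S U + rhoK k ρ' U - rhoK k ρ'' S) =
        phiF (A := A) br hadd₁ hadd₂ ρ' ρ'' S U := by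
      unfold phiF; rw [map_sub, map_add]
    have hW₂ : piK A (LLK br hadd₁ hadd₂ T S + rhoK k ρ S - rhoK k ρ' T) =
        phiF (A := A) br hadd₁ hadd₂ ρ ρ' T S := by
      unfold phiF; rw [map_sub, map_add]
    have hW₃ : piK A (LLK br hadd₁ hadd₂ T U + rhoK k ρ U - rhoK k ρ'' T) =
        phiF (A := A) br hadd₁ hadd₂ ρ ρ'' T U := by
      unfold phiF; rw [map_sub, map_add]
    have e₁ := rep x ⟨(⁅ρ', ρ''⁆, phiF (A := A) br hadd₁ hadd₂ ρ' ρ'' S U),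
        fun a => memb ΓM br hadd₁ hadd₂ hΓlie _ _ _ _
          (hcompT y _ (hl _)) (hcompT z _ (hl _)) a⟩
      T (LLK br hadd₁ hadd₂ S U + rhoK k ρ' U - rhoK k ρ'' S) (hl _) hW₁
    have e₂ := rep ⟨(⁅ρ, ρ'⁆, phiF (A := A) br hadd₁ hadd₂ ρ ρ' T S),
        fun a => memb ΓM br hadd₁ hadd₂ hΓlie _ _ _ _
          (hcompT x _ (hl _)) (hcompT y _ (hl _)) a⟩ z
      (LLK br hadd₁ hadd₂ T S + rhoK k ρ S - rhoK k ρ' T) U hW₂ (hl _)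
    have e₃ := rep y ⟨(⁅ρ, ρ''⁆, phiF (A := A) br hadd₁ hadd₂ ρ ρ'' T U),
        fun a => memb ΓM br hadd₁ hadd₂ hΓlie _ _ _ _
          (hcompT x _ (hl _)) (hcompT z _ (hl _)) a⟩
      S (LLK br hadd₁ hadd₂ T U + rhoK k ρ U - rhoK k ρ'' T) (hl _) hW₃
    dsimp only at e₁ e₂ e₃
    show phiF (A := A) br hadd₁ hadd₂ ρ ⁅ρ', ρ''⁆ T
        (l (phiF (A := A) br hadd₁ hadd₂ ρ' ρ'' S U)) = _
    rw [show l (x : Derivation k B B × (B ⊗[A] M)).2 = T from rfl] at e₁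
    rw [e₁, Submodule.coe_add, Prod.snd_add]
    show _ = phiF (A := A) br hadd₁ hadd₂ ⁅ρ, ρ'⁆ ρ''
        (l (phiF (A := A) br hadd₁ hadd₂ ρ ρ' T S)) U +
      phiF (A := A) br hadd₁ hadd₂ ρ' ⁅ρ, ρ''⁆ S
        (l (phiF (A := A) br hadd₁ hadd₂ ρ ρ'' T U))
    rw [e₂, e₃, phiF_jacobi br hadd₁ hadd₂ hanti hjac]
  -- (6) Leibniz rule
  · intro x y b
    apply Subtype.ext
    dsimp only
    refine Prod.ext ?_ ?_
    · show ⁅_, ((b • y : ↥P) : Derivation k B B × (B ⊗[A] M)).1⁆ = _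
      rw [Submodule.coe_smul, Prod.smul_fst, der_bracket_smul]
      rfl
    · have e := rep x (b • y) (l (x : Derivation k B B × (B ⊗[A] M)).2)
        (b • l (y : Derivation k B B × (B ⊗[A] M)).2)
        (hl _) (by rw [piK_smul, hl, Submodule.coe_smul, Prod.smul_snd])
      show phiF (A := A) br hadd₁ hadd₂ _ _ _ _ = _
      rw [e, Submodule.coe_smul, Prod.smul_fst, phiF_leib, hl]
      rfl
  -- (7) the anchor is a Lie algebra morphism
  · intro x y
    rfl
end

section
/- Let k be a field of characteristic zero, f: A → B a morphism of cdgas of finite type, and (A, M) a nice dg Lie-Rinehart pair: the anchor Γ_M: M → Der(A) is surjective, M is projective as a graded A-module, and −⊗_A M preserves quasi-isomorphisms. Then the pullback f^!M = Der(B) ×_{Der(A,B)} (B⊗_A M) satisfies: (i) its anchor (first projection) is surjective; (ii) as a graded B-module f^!M ≅ Der(B) ⊕ (Ker Γ_M)⊗_A B, hence is projective; so in particular the pullback of a nice LR pair has surjective anchor and projective underlying graded module. -/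
open TensorProduct

universe u

namespace LR18

section Basic

variable {k A B M : Type*} [Field k] [CommRing A] [CommRing B]
    [Algebra k A] [Algebra k B] [Algebra A B] [IsScalarTower k A B]
    [AddCommGroup M] [Module A M]

/-- the map `Ψ : B ⊗ M → Der(A,B)`. -/
noncomputable def Psi (ΓM : M →ₗ[A] Derivation k A A) :
    B ⊗[A] M →ₗ[B] Derivation k A B :=
  TensorProduct.AlgebraTensorModule.lift
    { toFun := fun b =>
        { toFun := fun m => b • ((Algebra.linearMap A B).compDer (ΓM m))
          map_add' := by intro m n; simp [smul_add]
          map_smul' := by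
            intro a m
            ext x
            simp [Algebra.smul_def]
            ring }
      map_add' := by intro s t; ext m x; simp [add_smul]
      map_smul' := by intro s t; ext m x; simp [mul_smul] }

variable (ΓM : M →ₗ[A] Derivation k A A)

@[simp] lemma Psi_tmul (b : B) (m : M) (a : A) :
    Psi ΓM (b ⊗ₜ m) a = b * algebraMap A B (ΓM m a) := by
  simp [Psi, Algebra.smul_def]

lemma Psi_apply_eq_anchorPush (x : B ⊗[A] M) (a : A) :
    Psi ΓM x a = anchorPush k A B M ΓM a x := by
  induction x using TensorProduct.induction_on with
  | zero => simp
  | tmul b m => simp [anchorPush, Psi, Algebra.smul_def]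
  | add y z hy hz => simp only [map_add, Derivation.add_apply, hy, hz]

/-- `Φ : Der(B) → Der(A,B)`. -/
noncomputable def Phi : Derivation k B B →ₗ[B] Derivation k A B where
  toFun ρ := ρ.compAlgebraMap A
  map_add' ρ ρ' := by ext a; simp [Derivation.compAlgebraMap]
  map_smul' b ρ := by ext a; simp [Derivation.compAlgebraMap]

@[simp] lemma Phi_apply (ρ : Derivation k B B) (a : A) :
    (Phi ρ : Derivation k A B) a = ρ (algebraMap A B a) := rfl

lemma mem_lrPullback_iff (p : Derivation k B B × (B ⊗[A] M)) :
    p ∈ lrPullback k A B M ΓM ↔ (Phi p.1 : Derivation k A B) = Psi ΓM p.2 := by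
  constructor
  · intro h
    ext a
    rw [Phi_apply, Psi_apply_eq_anchorPush]
    exact h a
  · intro h a
    have := congrArg (fun D : Derivation k A B => D a) h
    simpa [Psi_apply_eq_anchorPush] using this

lemma Psi_baseChange_subtype (y : B ⊗[A] (LinearMap.ker ΓM)) :
    Psi ΓM ((LinearMap.ker ΓM).subtype.baseChange B y) = 0 := by
  induction y using TensorProduct.induction_on with
  | zero => simp
  | tmul b m =>
    ext a
    have : ΓM ((LinearMap.ker ΓM).subtype m) = 0 := m.2
    simp [LinearMap.baseChange_tmul, this]
  | add y z hy hz => simp [LinearMap.baseChange_tmul, hy, hz]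

end Basic

section Smooth

variable {k A : Type u} {B M : Type*} [Field k] [CommRing A] [CommRing B]
    [Algebra k A] [Algebra k B] [Algebra A B] [IsScalarTower k A B]
    [AddCommGroup M] [Module A M]
    [Algebra.FiniteType k A] [Algebra.FormallySmooth k A]
    (ΓM : M →ₗ[A] Derivation k A A)

/-- Projectivity of `Der(A)`. -/
lemma projective_derivation : Module.Projective A (Derivation k A A) := by
  have : Module.Projective A (Module.Dual A (Ω[A⁄k])) := inferInstance
  exact Module.Projective.of_equiv (KaehlerDifferential.linearMapEquivDerivation k A)

/-- A splitting of a surjective anchor. -/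
lemma exists_sigma (hΓ : Function.Surjective ΓM) :
    ∃ σ : Derivation k A A →ₗ[A] M, ΓM ∘ₗ σ = LinearMap.id := by
  have := projective_derivation (k := k) (A := A)
  exact ΓM.exists_rightInverse_of_surjective (LinearMap.range_eq_top.2 hΓ)

/-- reconstruction from a finite dual family -/
lemma repr_lemma {A : Type*} [CommRing A] {O N : Type*} [AddCommGroup O] [Module A O]
    [AddCommGroup N] [Module A N] {n : ℕ}
    (u : (Fin n → A) →ₗ[A] O) (v : O →ₗ[A] Fin n → A) (huv : u ∘ₗ v = LinearMap.id)
    (h : O →ₗ[A] N) (x : O) :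
    h x = ∑ i, v x i • h (u (Pi.single i 1)) := by
  have hx : h x = ∑ i, h (u (Pi.single i (v x i))) := by
    conv_lhs => rw [show x = u (v x) from (congrArg (fun f => f x) huv.symm),
      show v x = ∑ i, Pi.single i (v x i) from (Finset.univ_sum_single (v x)).symm]
    rw [map_sum, map_sum]
  rw [hx]
  refine Finset.sum_congr rfl fun i _ => ?_
  have hsingle : (Pi.single i (v x i) : Fin n → A)
      = v x i • (Pi.single i 1 : Fin n → A) := by
    rw [← Pi.single_smul, smul_eq_mul, mul_one]
  rw [hsingle, map_smul, map_smul]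

lemma lift_zero : ((0 : Derivation k A B)).liftKaehlerDifferential = 0 := by
  refine Derivation.liftKaehlerDifferential_unique _ _ ?_
  rw [Derivation.liftKaehlerDifferential_comp]
  ext a
  simp

lemma lift_add (D D' : Derivation k A B) :
    (D + D').liftKaehlerDifferential
      = D.liftKaehlerDifferential + D'.liftKaehlerDifferential := by
  refine Derivation.liftKaehlerDifferential_unique _ _ ?_
  rw [Derivation.liftKaehlerDifferential_comp]
  ext a
  simp [Derivation.liftKaehlerDifferential_comp_D]

lemma lift_smulB (b : B) (D : Derivation k A B) :
    (b • D).liftKaehlerDifferential = b • D.liftKaehlerDifferential := by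
  refine Derivation.liftKaehlerDifferential_unique _ _ ?_
  rw [Derivation.liftKaehlerDifferential_comp]
  ext a
  simp [Derivation.liftKaehlerDifferential_comp_D]

lemma lift_compDer (δ : Derivation k A A) :
    ((Algebra.linearMap A B).compDer δ).liftKaehlerDifferential
      = (Algebra.linearMap A B) ∘ₗ δ.liftKaehlerDifferential := by
  refine Derivation.liftKaehlerDifferential_unique _ _ ?_
  rw [Derivation.liftKaehlerDifferential_comp]
  ext a
  simp [Derivation.liftKaehlerDifferential_comp_D]

lemma dsum_apply {R S N : Type*} [CommRing R] [CommRing S] [Algebra R S]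
    [AddCommGroup N] [Module R N] [Module S N]
    {ι : Type*} (s : Finset ι) (D : ι → Derivation R S N) (a : S) :
    (∑ i ∈ s, D i) a = ∑ i ∈ s, D i a := by
  classical
  induction s using Finset.cons_induction with
  | empty => simp
  | cons i s hi ih => rw [Finset.sum_cons, Finset.sum_cons, Derivation.add_apply, ih]

/-- The master lemma: a linear section `χ` of `Ψ` over `Φ`, and the kernel property. -/
lemma master (hΓ : Function.Surjective ΓM) :
    ∃ χ : Derivation k B B →ₗ[B] B ⊗[A] M,
      (∀ ρ, Psi ΓM (χ ρ) = Phi ρ) ∧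
      (∀ x : B ⊗[A] M, Psi ΓM x = 0 → ΓM.baseChange B x = 0) := by
  classical
  obtain ⟨n, u, v, -, -, huv⟩ :=
    Module.Finite.exists_comp_eq_id_of_projective A (Ω[A⁄k])
  set 𝒟 := KaehlerDifferential.D k A with h𝒟
  set ω : Fin n → Ω[A⁄k] := fun i => u (Pi.single i 1) with hω
  set δ : Fin n → Derivation k A A :=
    fun i => ((LinearMap.proj i) ∘ₗ v).compDer 𝒟 with hδdef
  have hδ : ∀ i a, δ i a = v (𝒟 a) i := fun i a => rfl
  have hreconA : ∀ (L : Ω[A⁄k] →ₗ[A] A) (a : A), L (𝒟 a) = ∑ i, v (𝒟 a) i • L (ω i) :=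
    fun L a => repr_lemma u v huv L (𝒟 a)
  have hreconB : ∀ (L : Ω[A⁄k] →ₗ[A] B) (a : A), L (𝒟 a) = ∑ i, v (𝒟 a) i • L (ω i) :=
    fun L a => repr_lemma u v huv L (𝒟 a)
  choose m hm using fun i => hΓ (δ i)
  -- reconstruction of a derivation A → A from its values against the dual family
  have hrecon : ∀ d : Derivation k A A,
      (∑ i, d.liftKaehlerDifferential (ω i) • δ i) = d := by
    intro d
    ext a
    rw [dsum_apply]
    rw [show d a = d.liftKaehlerDifferential (𝒟 a) from
      (Derivation.liftKaehlerDifferential_comp_D d a).symm, hreconA]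
    refine Finset.sum_congr rfl fun i _ => ?_
    rw [Derivation.smul_apply, hδ i a, smul_eq_mul, smul_eq_mul, mul_comm]
  let χ : Derivation k B B →ₗ[B] B ⊗[A] M :=
    { toFun := fun ρ => ∑ i,
        ((Phi ρ : Derivation k A B).liftKaehlerDifferential (ω i)) ⊗ₜ[A] m i
      map_add' := by
        intro ρ ρ'
        simp only [map_add, lift_add, LinearMap.add_apply, add_tmul,
          Finset.sum_add_distrib]
      map_smul' := by
        intro b ρ
        simp only [map_smul, lift_smulB, LinearMap.smul_apply, smul_tmul',
          RingHom.id_apply, Finset.smul_sum] }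
  refine ⟨χ, ?_, ?_⟩
  · -- Ψ ∘ χ = Φ
    intro ρ
    ext a
    simp only [χ, LinearMap.coe_mk, AddHom.coe_mk]
    rw [map_sum, dsum_apply]
    rw [show (Phi ρ : Derivation k A B) a
        = (Phi ρ : Derivation k A B).liftKaehlerDifferential (𝒟 a) from
      (Derivation.liftKaehlerDifferential_comp_D _ a).symm, hreconB]
    refine Finset.sum_congr rfl fun i _ => ?_
    rw [Psi_tmul, hm i, hδ i a, Algebra.smul_def, mul_comm]
  · -- kernel property
    have claim : ∀ x : B ⊗[A] M, ΓM.baseChange B x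
        = ∑ i, ((Psi ΓM x).liftKaehlerDifferential (ω i)) ⊗ₜ[A] δ i := by
      intro x
      induction x using TensorProduct.induction_on with
      | zero => simp [lift_zero]
      | tmul b mm =>
        rw [LinearMap.baseChange_tmul]
        have h1 : Psi ΓM (b ⊗ₜ[A] mm)
            = b • ((Algebra.linearMap A B).compDer (ΓM mm)) := by
          ext a; rw [Psi_tmul]; simp [Algebra.smul_def]
        rw [h1, lift_smulB, lift_compDer]
        have hterm : ∀ i, ((b • ((Algebra.linearMap A B) ∘ₗ
              (ΓM mm).liftKaehlerDifferential)) (ω i)) ⊗ₜ[A] δ i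
            = b ⊗ₜ[A] (((ΓM mm).liftKaehlerDifferential (ω i)) • δ i) := by
          intro i
          rw [LinearMap.smul_apply, LinearMap.comp_apply, Algebra.linearMap_apply,
            smul_eq_mul, mul_comm, ← Algebra.smul_def, TensorProduct.smul_tmul]
        rw [Finset.sum_congr rfl (fun i _ => hterm i), ← TensorProduct.tmul_sum,
          hrecon (ΓM mm)]
      | add y z hy hz =>
        rw [map_add, map_add, hy, hz, ← Finset.sum_add_distrib]
        refine Finset.sum_congr rfl fun i _ => ?_
        rw [lift_add, LinearMap.add_apply, add_tmul]
    intro x hx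
    rw [claim x, hx, lift_zero]
    simp

end Smooth

end LR18

/-- Let `k` be a field of characteristic zero, `f : A → B` a morphism of
cdgas of finite type (encoded: `A`, `B` are finite-type, formally smooth `k`-algebras — the
ungraded avatar of "semi-free on finitely many generators" — and `Algebra A B` encodes `f`),
and `(A, M)` a *nice* Lie–Rinehart pair: the anchor `Γ_M : M → Der(A)` is surjective and `M` is
projective.  Then the pullback `f^!M = Der(B) ×_{Der(A,B)} (B ⊗_A M)` satisfies:
(i) its anchor (the first projection) is surjective, and
(ii) as a `B`-module, `f^!M ≅ Der(B) ⊕ (Ker Γ_M) ⊗_A B`, hence it is projective. -/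
theorem stmt18 (k A B M : Type u) [Field k] [CharZero k] [CommRing A] [CommRing B]
    [Algebra k A] [Algebra k B] [Algebra A B] [IsScalarTower k A B]
    [Algebra.FiniteType k A] [Algebra.FormallySmooth k A]
    [Algebra.FiniteType k B] [Algebra.FormallySmooth k B]
    [AddCommGroup M] [Module A M] [Module.Projective A M]
    (ΓM : M →ₗ[A] Derivation k A A)
    (hΓsurj : Function.Surjective ΓM) :
    -- (i) the anchor of the pullback (the first projection) is surjective
    (∀ ρ : Derivation k B B, ∃ x : B ⊗[A] M, (ρ, x) ∈ lrPullback k A B M ΓM) ∧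
    -- (ii) the pullback splits as `Der(B) ⊕ (Ker Γ_M) ⊗_A B`, and is projective
    Nonempty (↥(lrPullback k A B M ΓM) ≃ₗ[B]
        Derivation k B B × (B ⊗[A] ↥(LinearMap.ker ΓM))) ∧
      Module.Projective B ↥(lrPullback k A B M ΓM) := by
  classical
  obtain ⟨χ, hχ, hker⟩ := LR18.master (B := B) ΓM hΓsurj
  obtain ⟨σ, hσ⟩ := LR18.exists_sigma ΓM hΓsurj
  have hσ' : ∀ d, ΓM (σ d) = d := fun d => by
    simpa using LinearMap.ext_iff.mp hσ d
  set K := LinearMap.ker ΓM with hK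
  let p : M →ₗ[A] K := (LinearMap.id - σ ∘ₗ ΓM).codRestrict K (fun mm => by
    simp [K, LinearMap.mem_ker, hσ'])
  let j : K →ₗ[A] M := K.subtype
  have hp_apply : ∀ mm : M, (p mm : M) = mm - σ (ΓM mm) := fun mm => rfl
  have hpj : p ∘ₗ j = LinearMap.id := by
    ext x
    show ((p (j x) : M)) = (x : M)
    rw [hp_apply]
    have : ΓM (j x) = 0 := x.2
    simp [j, this]
  have hjp : j ∘ₗ p = LinearMap.id - σ ∘ₗ ΓM := by
    ext mm
    simp [j, hp_apply]
  -- the two linear maps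
  let S0 : (Derivation k B B × (B ⊗[A] K)) →ₗ[B] (Derivation k B B × (B ⊗[A] M)) :=
    { toFun := fun z => (z.1, j.baseChange B z.2 + χ z.1)
      map_add' := by
        intro z z'
        simp only [Prod.fst_add, Prod.snd_add, map_add, Prod.mk_add_mk]
        refine congrArg _ ?_
        abel
      map_smul' := by
        intro b z
        simp only [Prod.smul_fst, Prod.smul_snd, map_smul, RingHom.id_apply,
          Prod.smul_mk, smul_add] }
  have hS0mem : ∀ z, S0 z ∈ lrPullback k A B M ΓM := by
    intro z
    rw [LR18.mem_lrPullback_iff]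
    show (LR18.Phi z.1 : Derivation k A B) = LR18.Psi ΓM (j.baseChange B z.2 + χ z.1)
    rw [map_add, LR18.Psi_baseChange_subtype, hχ, zero_add]
  let S : (Derivation k B B × (B ⊗[A] K)) →ₗ[B] ↥(lrPullback k A B M ΓM) :=
    S0.codRestrict _ hS0mem
  let T0 : (Derivation k B B × (B ⊗[A] M)) →ₗ[B] (Derivation k B B × (B ⊗[A] K)) :=
    { toFun := fun z => (z.1, p.baseChange B (z.2 - χ z.1))
      map_add' := by
        intro z z'
        refine Prod.ext rfl ?_
        show p.baseChange B ((z.2 + z'.2) - χ (z.1 + z'.1))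
          = p.baseChange B (z.2 - χ z.1) + p.baseChange B (z'.2 - χ z'.1)
        have hre : (z.2 + z'.2) - χ (z.1 + z'.1)
            = (z.2 - χ z.1) + (z'.2 - χ z'.1) := by
          rw [map_add]; abel
        rw [hre, map_add]
      map_smul' := by
        intro b z
        refine Prod.ext rfl ?_
        show p.baseChange B (b • z.2 - χ (b • z.1))
          = b • p.baseChange B (z.2 - χ z.1)
        rw [map_smul χ, ← map_smul (p.baseChange B) b]
        congr 1
        exact (smul_sub b _ _).symm }
  let T : ↥(lrPullback k A B M ΓM) →ₗ[B] (Derivation k B B × (B ⊗[A] K)) :=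
    T0 ∘ₗ (lrPullback k A B M ΓM).subtype
  have hbc_pj : ∀ y : B ⊗[A] K, p.baseChange B (j.baseChange B y) = y := by
    intro y
    have : p.baseChange B (j.baseChange B y) = (p ∘ₗ j).baseChange B y := by
      rw [LinearMap.baseChange_comp]; rfl
    rw [this, hpj, LinearMap.baseChange_id, LinearMap.id_apply]
  have hbc_jp : ∀ w : B ⊗[A] M, ΓM.baseChange B w = 0 →
      j.baseChange B (p.baseChange B w) = w := by
    intro w hw
    have h1 : j.baseChange B (p.baseChange B w) = (j ∘ₗ p).baseChange B w := by
      rw [LinearMap.baseChange_comp]; rfl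
    rw [h1, hjp, LinearMap.baseChange_sub, LinearMap.baseChange_id,
      LinearMap.baseChange_comp, LinearMap.sub_apply, LinearMap.id_apply,
      LinearMap.comp_apply, hw, map_zero, sub_zero]
  have hTS : ∀ z, T (S z) = z := by
    intro z
    refine Prod.ext rfl ?_
    show p.baseChange B ((j.baseChange B z.2 + χ z.1) - χ z.1) = z.2
    rw [add_sub_cancel_right, hbc_pj]
  have hST : ∀ q, S (T q) = q := by
    intro q
    apply Subtype.ext
    refine Prod.ext rfl ?_
    show j.baseChange B (p.baseChange B (q.1.2 - χ q.1.1)) + χ q.1.1 = q.1.2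
    have hmem := (LR18.mem_lrPullback_iff ΓM _).mp q.2
    have hz : ΓM.baseChange B (q.1.2 - χ q.1.1) = 0 := by
      refine hker _ ?_
      rw [map_sub, ← hmem, hχ, sub_self]
    rw [hbc_jp _ hz, sub_add_cancel]
  let E : ↥(lrPullback k A B M ΓM) ≃ₗ[B] Derivation k B B × (B ⊗[A] K) :=
    LinearEquiv.ofLinear T S (LinearMap.ext fun z => hTS z)
      (LinearMap.ext fun q => hST q)
  refine ⟨fun ρ => ⟨χ ρ, (LR18.mem_lrPullback_iff ΓM (ρ, χ ρ)).mpr (hχ ρ).symm⟩, ⟨E⟩, ?_⟩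
  -- projectivity
  haveI h1 : Module.Projective B (Derivation k B B) := by
    haveI : Module.Projective B (Module.Dual B (Ω[B⁄k])) := inferInstance
    exact Module.Projective.of_equiv (KaehlerDifferential.linearMapEquivDerivation k B)
  haveI h2 : Module.Projective A K := Module.Projective.of_split j p hpj
  haveI h3 : Module.Projective B (B ⊗[A] K) := inferInstance
  exact Module.Projective.of_equiv E.symm
end
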